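/- Let T be a trilinear form on ℝ^N of pure boost weight zero with respect to a null frame, i.e. its only possibly nonzero null-frame components are T_{01i}, T_{10i}, T_{0i1}, T_{1i0}, T_{i01}, T_{i10} and T_{ijk} (spatial i, j, k). Define the four bilinear forms S¹_{ad} = T_{abc} T_d{}^{cb}, S²_{cd} = T_{abc} T^{a}{}_d{}^{b}, S³_{ad} = T_{abc} T^{b}{}_d{}^{c}, S⁴_{cd} = T_{abc} T_d{}^{ba} (indices raised with η). Suppose that for each k = 1,2,3,4 the scalar invariants S^k_{ab} S^{k\,ba} and S^{k(2)}_{ac} S^{k(2)ac} vanish (where S^{k(2)}_{ac} = S^k_{ab} S^k{}_c{}^{b}), and that T_{abc} T^{abc} = 0. Then T = 0. (Contrapositive: a nonzero rank-3 tensor of pure boost weight zero possesses a non-vanishing scalar invariant.) -/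

import Mathlib

open Matrix

/-! Null-frame formalism: we work with the components of tensors with respect to a
null frame `e_0 = ℓ, e_1 = n, e_2 = m_2, …, e_{N−1} = m_{N−1}` for the Minkowski
form `η` on `ℝ^N` (so `η(ℓ,n) = 1`, `η(m_i,m_j) = δ_{ij}`, all other frame products
vanish).  `ηnf N` is the matrix of frame components `η_{AB}`, and `ηup N = (ηnf N)⁻¹`
is the matrix of the inverse-metric components `η^{AB}` used to raise indices.
Spatial indices are those `i : Fin N` with `2 ≤ i`. -/

/-- Frame components `η_{AB}` of the Minkowski form in a null frame. -/
def ηnf (N : ℕ) : Matrix (Fin N) (Fin N) ℝ :=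
  Matrix.of fun A B =>
    if ((A : ℕ) = 0 ∧ (B : ℕ) = 1) ∨ ((A : ℕ) = 1 ∧ (B : ℕ) = 0) then 1
    else if A = B ∧ 2 ≤ (A : ℕ) then 1 else 0

/-- Components `η^{AB}` of the inverse metric in a null frame. -/
noncomputable def ηup (N : ℕ) : Matrix (Fin N) (Fin N) ℝ := (ηnf N)⁻¹

/-- The boost weight of a null-frame index: `+1` for the index `0` (the `ℓ` slot),
`−1` for the index `1` (the `n` slot), `0` for spatial indices. -/
def bw {N : ℕ} (A : Fin N) : ℤ :=
  if (A : ℕ) = 0 then 1 else if (A : ℕ) = 1 then -1 else 0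


/-- The square of a rank-2 tensor with one index raised:
`T⁽²⁾_{ac} = T_{ab} T_c{}^b = T_{ab} η^{bb'} T_{cb'}`. -/
noncomputable def sq2 (N : ℕ) (T : Fin N → Fin N → ℝ) : Fin N → Fin N → ℝ :=
  fun a c => ∑ b, ∑ b', T a b * ηup N b b' * T c b'

/-- `S¹_{ad} = T_{abc} T_d{}^{cb}` (indices raised with `η`). -/
noncomputable def S1 (N : ℕ) (T : Fin N → Fin N → Fin N → ℝ) : Fin N → Fin N → ℝ :=
  fun a d => ∑ b, ∑ c, ∑ b', ∑ c', T a b c * ηup N b b' * ηup N c c' * T d c' b'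

/-- `S²_{cd} = T_{abc} T^{a}{}_d{}^{b}`. -/
noncomputable def S2 (N : ℕ) (T : Fin N → Fin N → Fin N → ℝ) : Fin N → Fin N → ℝ :=
  fun c d => ∑ a, ∑ b, ∑ a', ∑ b', T a b c * ηup N a a' * ηup N b b' * T a' d b'

/-- `S³_{ad} = T_{abc} T^{b}{}_d{}^{c}`. -/
noncomputable def S3 (N : ℕ) (T : Fin N → Fin N → Fin N → ℝ) : Fin N → Fin N → ℝ :=
  fun a d => ∑ b, ∑ c, ∑ b', ∑ c', T a b c * ηup N b b' * ηup N c c' * T b' d c'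

/-- `S⁴_{cd} = T_{abc} T_d{}^{ba}`. -/
noncomputable def S4 (N : ℕ) (T : Fin N → Fin N → Fin N → ℝ) : Fin N → Fin N → ℝ :=
  fun c d => ∑ a, ∑ b, ∑ a', ∑ b', T a b c * ηup N a a' * ηup N b b' * T d b' a'

/-- The scalar invariant `S_{ab} Sᵇᵃ` of a rank-2 tensor `S`. -/
noncomputable def invTr (N : ℕ) (S : Fin N → Fin N → ℝ) : ℝ :=
  ∑ a, ∑ b, ∑ a', ∑ b', S a b * ηup N a a' * ηup N b b' * S b' a'

/-- The scalar invariant `S⁽²⁾_{ac} S⁽²⁾ᵃᶜ` of a rank-2 tensor `S`,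
where `S⁽²⁾_{ac} = S_{ab} S_c{}^b`. -/
noncomputable def invSq (N : ℕ) (S : Fin N → Fin N → ℝ) : ℝ :=
  ∑ a, ∑ c, ∑ a', ∑ c', sq2 N S a c * ηup N a a' * ηup N c c' * sq2 N S a' c'
/-- swap of the two null directions -/
def sw {N : ℕ} (A : Fin N) : Fin N :=
  if (A : ℕ) = 0 then ⟨1 % N, Nat.mod_lt _ A.pos⟩
  else if (A : ℕ) = 1 then ⟨0, A.pos⟩ else A

def z0 {N : ℕ} (hN : 2 ≤ N) : Fin N := ⟨0, by omega⟩
def z1 {N : ℕ} (hN : 2 ≤ N) : Fin N := ⟨1, by omega⟩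

lemma sw_z0 {N : ℕ} (hN : 2 ≤ N) : sw (z0 hN) = z1 hN := by
  simp [sw, z0, z1, Fin.ext_iff, Nat.mod_eq_of_lt (by omega : 1 < N)]

lemma sw_z1 {N : ℕ} (hN : 2 ≤ N) : sw (z1 hN) = z0 hN := by
  simp [sw, z0, z1, Fin.ext_iff]

lemma sw_sp {N : ℕ} {A : Fin N} (h : 2 ≤ (A : ℕ)) : sw A = A := by
  unfold sw
  rw [if_neg (by omega), if_neg (by omega)]

lemma tri {N : ℕ} (hN : 2 ≤ N) (A : Fin N) :
    A = z0 hN ∨ A = z1 hN ∨ 2 ≤ (A : ℕ) := by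
  rcases Nat.lt_or_ge (A : ℕ) 2 with h | h
  · interval_cases h' : (A : ℕ)
    · exact Or.inl (by simp [z0, Fin.ext_iff, h'])
    · exact Or.inr (Or.inl (by simp [z1, Fin.ext_iff, h']))
  · exact Or.inr (Or.inr h)

lemma bw_z0 {N : ℕ} (hN : 2 ≤ N) : bw (z0 hN) = 1 := by simp [bw, z0]
lemma bw_z1 {N : ℕ} (hN : 2 ≤ N) : bw (z1 hN) = -1 := by simp [bw, z1]
lemma bw_sp {N : ℕ} {A : Fin N} (h : 2 ≤ (A : ℕ)) : bw A = 0 := by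
  simp [bw]; omega

lemma sw_sw {N : ℕ} (hN : 2 ≤ N) (A : Fin N) : sw (sw A) = A := by
  rcases tri hN A with h | h | h
  · rw [h, sw_z0, sw_z1]
  · rw [h, sw_z1, sw_z0]
  · rw [sw_sp h, sw_sp h]

lemma bw_sw {N : ℕ} (hN : 2 ≤ N) (A : Fin N) : bw (sw A) = - bw A := by
  rcases tri hN A with h | h | h
  · rw [h, sw_z0, bw_z0, bw_z1]
  · rw [h, sw_z1, bw_z1, bw_z0]; ring
  · rw [sw_sp h, bw_sp h]; ring

lemma sw_val {N : ℕ} (hN : 2 ≤ N) (A : Fin N) :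
    ((sw A) : ℕ) = if (A : ℕ) = 0 then 1 else if (A : ℕ) = 1 then 0 else (A : ℕ) := by
  unfold sw
  split_ifs <;> simp [Nat.mod_eq_of_lt (show 1 < N by omega)]

lemma etanf_apply {N : ℕ} (hN : 2 ≤ N) (i j : Fin N) :
    ηnf N i j = if j = sw i then 1 else 0 := by
  have hi := i.isLt
  have hj := j.isLt
  simp only [ηnf, Matrix.of_apply, Fin.ext_iff, sw_val hN]
  split_ifs <;> first | rfl | omega
lemma etanf_mul_self {N : ℕ} (hN : 2 ≤ N) : ηnf N * ηnf N = 1 := by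
  ext i j
  rw [Matrix.mul_apply, Matrix.one_apply]
  simp only [etanf_apply hN]
  rw [Finset.sum_eq_single (sw i)]
  · rw [if_pos rfl, sw_sw hN, one_mul]
    by_cases h : j = i
    · simp [h]
    · rw [if_neg h, if_neg (fun hh => h hh.symm)]
  · intro b _ hb
    rw [if_neg hb, zero_mul]
  · simp

lemma etaup_apply {N : ℕ} (hN : 2 ≤ N) (i j : Fin N) :
    ηup N i j = if j = sw i then 1 else 0 := by
  rw [show ηup N = ηnf N from Matrix.inv_eq_right_inv (etanf_mul_self hN),
    etanf_apply hN]

lemma contract {N : ℕ} (hN : 2 ≤ N) (b : Fin N) (x : Fin N → ℝ) :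
    ∑ b', ηup N b b' * x b' = x (sw b) := by
  simp [etaup_apply hN, ite_mul]
section collapse
variable {N : ℕ}

lemma sq2_eq (hN : 2 ≤ N) (S : Fin N → Fin N → ℝ) (a c : Fin N) :
    sq2 N S a c = ∑ b, S a b * S c (sw b) := by
  unfold sq2
  simp only [etaup_apply hN, mul_ite, ite_mul, mul_one, mul_zero, zero_mul,
    one_mul, Finset.sum_ite_eq', Finset.mem_univ, if_true]

lemma invTr_eq (hN : 2 ≤ N) (S : Fin N → Fin N → ℝ) :
    invTr N S = ∑ a, ∑ b, S a b * S (sw b) (sw a) := by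
  unfold invTr
  simp only [etaup_apply hN, mul_ite, ite_mul, mul_one, mul_zero, zero_mul,
    one_mul, Finset.sum_ite_eq', Finset.mem_univ, if_true]

lemma invSq_eq (hN : 2 ≤ N) (S : Fin N → Fin N → ℝ) :
    invSq N S = ∑ a, ∑ c, sq2 N S a c * sq2 N S (sw a) (sw c) := by
  unfold invSq
  simp only [etaup_apply hN, mul_ite, ite_mul, mul_one, mul_zero, zero_mul,
    one_mul, Finset.sum_ite_eq', Finset.mem_univ, if_true]

lemma S1_eq (hN : 2 ≤ N) (T : Fin N → Fin N → Fin N → ℝ) (a d : Fin N) :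
    S1 N T a d = ∑ b, ∑ c, T a b c * T d (sw c) (sw b) := by
  unfold S1
  simp only [etaup_apply hN, mul_ite, ite_mul, mul_one, mul_zero, zero_mul,
    one_mul, Finset.sum_ite_eq', Finset.mem_univ, if_true]

lemma S2_eq (hN : 2 ≤ N) (T : Fin N → Fin N → Fin N → ℝ) (c d : Fin N) :
    S2 N T c d = ∑ a, ∑ b, T a b c * T (sw a) d (sw b) := by
  unfold S2
  simp only [etaup_apply hN, mul_ite, ite_mul, mul_one, mul_zero, zero_mul,
    one_mul, Finset.sum_ite_eq', Finset.mem_univ, if_true]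

lemma S3_eq (hN : 2 ≤ N) (T : Fin N → Fin N → Fin N → ℝ) (a d : Fin N) :
    S3 N T a d = ∑ b, ∑ c, T a b c * T (sw b) d (sw c) := by
  unfold S3
  simp only [etaup_apply hN, mul_ite, ite_mul, mul_one, mul_zero, zero_mul,
    one_mul, Finset.sum_ite_eq', Finset.mem_univ, if_true]

lemma S4_eq (hN : 2 ≤ N) (T : Fin N → Fin N → Fin N → ℝ) (c d : Fin N) :
    S4 N T c d = ∑ a, ∑ b, T a b c * T d (sw b) (sw a) := by
  unfold S4
  simp only [etaup_apply hN, mul_ite, ite_mul, mul_one, mul_zero, zero_mul,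
    one_mul, Finset.sum_ite_eq', Finset.mem_univ, if_true]

end collapse
lemma key {N : ℕ} (hN : 2 ≤ N) (S : Fin N → Fin N → ℝ)
    (hblk : ∀ a b : Fin N, bw a + bw b ≠ 0 → S a b = 0)
    (htr : invTr N S = 0) (hsq : invSq N S = 0) :
    ∀ a b, S a b = 0 := by
  have hsqblk : ∀ a c : Fin N, bw a + bw c ≠ 0 → sq2 N S a c = 0 := by
    intro a c h
    rw [sq2_eq hN]
    apply Finset.sum_eq_zero; intro b _
    by_cases hb : bw a + bw b = 0
    · have h2 : bw c + bw (sw b) ≠ 0 := by rw [bw_sw hN]; omega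
      rw [hblk _ _ h2, mul_zero]
    · rw [hblk _ _ hb, zero_mul]
  have h01 : sq2 N S (z0 hN) (z1 hN) = S (z0 hN) (z1 hN) * S (z1 hN) (z0 hN) := by
    rw [sq2_eq hN, Finset.sum_eq_single (z1 hN)]
    · rw [sw_z1]
    · intro b _ hb
      have hz : S (z0 hN) b = 0 := by
        apply hblk
        rcases tri hN b with h | h | h
        · rw [h, bw_z0 hN]; norm_num
        · exact absurd h hb
        · rw [bw_z0 hN, bw_sp h]; norm_num
      rw [hz, zero_mul]
    · simp
  have h10 : sq2 N S (z1 hN) (z0 hN) = S (z1 hN) (z0 hN) * S (z0 hN) (z1 hN) := by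
    rw [sq2_eq hN, Finset.sum_eq_single (z0 hN)]
    · rw [sw_z0]
    · intro b _ hb
      have hz : S (z1 hN) b = 0 := by
        apply hblk
        rcases tri hN b with h | h | h
        · exact absurd h hb
        · rw [h, bw_z1 hN]; norm_num
        · rw [bw_z1 hN, bw_sp h]; norm_num
      rw [hz, zero_mul]
    · simp
  have hnn : ∀ a c : Fin N, 0 ≤ sq2 N S a c * sq2 N S (sw a) (sw c) := by
    intro a c
    rcases tri hN a with ha | ha | ha
    · rcases tri hN c with hc | hc | hc
      · rw [ha, hc, hsqblk _ _ (by rw [bw_z0 hN]; norm_num), zero_mul]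
      · rw [ha, hc, sw_z0 hN, sw_z1 hN, h01, h10]
        nlinarith [sq_nonneg (S (z0 hN) (z1 hN) * S (z1 hN) (z0 hN))]
      · rw [ha, hsqblk _ _ (by rw [bw_z0 hN, bw_sp hc]; norm_num), zero_mul]
    · rcases tri hN c with hc | hc | hc
      · rw [ha, hc, sw_z0 hN, sw_z1 hN, h01, h10]
        nlinarith [sq_nonneg (S (z0 hN) (z1 hN) * S (z1 hN) (z0 hN))]
      · rw [ha, hc, hsqblk _ _ (by rw [bw_z1 hN]; norm_num), zero_mul]
      · rw [ha, hsqblk _ _ (by rw [bw_z1 hN, bw_sp hc]; norm_num), zero_mul]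
    · rcases tri hN c with hc | hc | hc
      · rw [hc, hsqblk _ _ (by rw [bw_z0 hN, bw_sp ha]; norm_num), zero_mul]
      · rw [hc, hsqblk _ _ (by rw [bw_z1 hN, bw_sp ha]; norm_num), zero_mul]
      · rw [sw_sp ha, sw_sp hc]
        exact mul_self_nonneg _
  have hsq' : ∑ a, ∑ c, sq2 N S a c * sq2 N S (sw a) (sw c) = 0 := by
    rw [← invSq_eq hN]; exact hsq
  have hterm : ∀ a c : Fin N, sq2 N S a c * sq2 N S (sw a) (sw c) = 0 := by
    intro a c
    have o := (Finset.sum_eq_zero_iff_of_nonneg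
      (fun a _ => Finset.sum_nonneg (fun c _ => hnn a c))).mp hsq' a (Finset.mem_univ a)
    exact (Finset.sum_eq_zero_iff_of_nonneg (fun c _ => hnn a c)).mp o c (Finset.mem_univ c)
  have hrow : ∀ a b : Fin N, 2 ≤ (a : ℕ) → S a b = 0 := by
    intro a b ha
    have h1 : sq2 N S a a = 0 := by
      have h2 := hterm a a; rw [sw_sp ha] at h2
      exact mul_self_eq_zero.mp h2
    have hsum : ∑ b', S a b' * S a b' = 0 := by
      rw [sq2_eq hN] at h1
      rw [← h1]
      apply Finset.sum_congr rfl
      intro b' _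
      rcases tri hN b' with hb | hb | hb
      · rw [hb, hblk a (z0 hN) (by rw [bw_sp ha, bw_z0 hN]; norm_num)]; simp
      · rw [hb, hblk a (z1 hN) (by rw [bw_sp ha, bw_z1 hN]; norm_num)]; simp
      · rw [sw_sp hb]
    have h3 := (Finset.sum_eq_zero_iff_of_nonneg
      (fun i _ => mul_self_nonneg (S a i))).mp hsum b (Finset.mem_univ b)
    exact mul_self_eq_zero.mp h3
  have htr' : ∑ a, ∑ b, S a b * S (sw b) (sw a) = 0 := by
    rw [← invTr_eq hN]; exact htr
  have hsquares : ∑ a, ∑ b, S a b * S a b = 0 := by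
    rw [← htr']
    apply Finset.sum_congr rfl; intro a _
    apply Finset.sum_congr rfl; intro b _
    rcases tri hN a with ha | ha | ha
    · rcases tri hN b with hb | hb | hb
      · rw [ha, hb, hblk _ _ (by rw [bw_z0 hN]; norm_num)]; simp
      · rw [ha, hb, sw_z1 hN, sw_z0 hN]
      · rw [ha, hblk _ _ (by rw [bw_z0 hN, bw_sp hb]; norm_num)]; simp
    · rcases tri hN b with hb | hb | hb
      · rw [ha, hb, sw_z0 hN, sw_z1 hN]
      · rw [ha, hb, hblk _ _ (by rw [bw_z1 hN]; norm_num)]; simp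
      · rw [ha, hblk _ _ (by rw [bw_z1 hN, bw_sp hb]; norm_num)]; simp
    · rw [hrow a b ha]; simp
  intro a b
  have o := (Finset.sum_eq_zero_iff_of_nonneg
    (fun a _ => Finset.sum_nonneg (fun c _ => mul_self_nonneg (S a c)))).mp hsquares a (Finset.mem_univ a)
  have h3 := (Finset.sum_eq_zero_iff_of_nonneg
    (fun i _ => mul_self_nonneg (S a i))).mp o b (Finset.mem_univ b)
  exact mul_self_eq_zero.mp h3
lemma bw_cases {N : ℕ} (hN : 2 ≤ N) (A : Fin N) :
    (A = z0 hN ∧ bw A = 1) ∨ (A = z1 hN ∧ bw A = -1) ∨ (2 ≤ (A : ℕ) ∧ bw A = 0) := by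
  rcases tri hN A with h | h | h
  · exact Or.inl ⟨h, by rw [h, bw_z0 hN]⟩
  · exact Or.inr (Or.inl ⟨h, by rw [h, bw_z1 hN]⟩)
  · exact Or.inr (Or.inr ⟨h, bw_sp h⟩)

lemma bw_ne1 {N : ℕ} (hN : 2 ≤ N) {A : Fin N} (h : A ≠ z1 hN) : bw A = 0 ∨ bw A = 1 := by
  rcases tri hN A with h' | h' | h'
  · exact Or.inr (by rw [h', bw_z0 hN])
  · exact absurd h' h
  · exact Or.inl (bw_sp h')

lemma bw_ne0 {N : ℕ} (hN : 2 ≤ N) {A : Fin N} (h : A ≠ z0 hN) : bw A = 0 ∨ bw A = -1 := by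
  rcases tri hN A with h' | h' | h'
  · exact absurd h' h
  · exact Or.inr (by rw [h', bw_z1 hN])
  · exact Or.inl (bw_sp h')

lemma S1_blk {N : ℕ} (hN : 2 ≤ N) (T : Fin N → Fin N → Fin N → ℝ)
    (hbw : ∀ a b c : Fin N, bw a + bw b + bw c ≠ 0 → T a b c = 0) :
    ∀ a d : Fin N, bw a + bw d ≠ 0 → S1 N T a d = 0 := by
  intro a d h
  rw [S1_eq hN]
  apply Finset.sum_eq_zero; intro b _
  apply Finset.sum_eq_zero; intro c _
  by_cases h1 : bw a + bw b + bw c = 0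
  · rw [hbw d (sw c) (sw b) (by rw [bw_sw hN, bw_sw hN]; omega), mul_zero]
  · rw [hbw _ _ _ h1, zero_mul]

lemma S2_blk {N : ℕ} (hN : 2 ≤ N) (T : Fin N → Fin N → Fin N → ℝ)
    (hbw : ∀ a b c : Fin N, bw a + bw b + bw c ≠ 0 → T a b c = 0) :
    ∀ c d : Fin N, bw c + bw d ≠ 0 → S2 N T c d = 0 := by
  intro c d h
  rw [S2_eq hN]
  apply Finset.sum_eq_zero; intro a _
  apply Finset.sum_eq_zero; intro b _
  by_cases h1 : bw a + bw b + bw c = 0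
  · rw [hbw (sw a) d (sw b) (by rw [bw_sw hN, bw_sw hN]; omega), mul_zero]
  · rw [hbw _ _ _ h1, zero_mul]

lemma S3_blk {N : ℕ} (hN : 2 ≤ N) (T : Fin N → Fin N → Fin N → ℝ)
    (hbw : ∀ a b c : Fin N, bw a + bw b + bw c ≠ 0 → T a b c = 0) :
    ∀ a d : Fin N, bw a + bw d ≠ 0 → S3 N T a d = 0 := by
  intro a d h
  rw [S3_eq hN]
  apply Finset.sum_eq_zero; intro b _
  apply Finset.sum_eq_zero; intro c _
  by_cases h1 : bw a + bw b + bw c = 0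
  · rw [hbw (sw b) d (sw c) (by rw [bw_sw hN, bw_sw hN]; omega), mul_zero]
  · rw [hbw _ _ _ h1, zero_mul]

lemma S4_blk {N : ℕ} (hN : 2 ≤ N) (T : Fin N → Fin N → Fin N → ℝ)
    (hbw : ∀ a b c : Fin N, bw a + bw b + bw c ≠ 0 → T a b c = 0) :
    ∀ c d : Fin N, bw c + bw d ≠ 0 → S4 N T c d = 0 := by
  intro c d h
  rw [S4_eq hN]
  apply Finset.sum_eq_zero; intro a _
  apply Finset.sum_eq_zero; intro b _
  by_cases h1 : bw a + bw b + bw c = 0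
  · rw [hbw d (sw b) (sw a) (by rw [bw_sw hN, bw_sw hN]; omega), mul_zero]
  · rw [hbw _ _ _ h1, zero_mul]

lemma split_sum {N : ℕ} (_hN : 2 ≤ N) (p : Fin N) (F : Fin N → Fin N → ℝ)
    (h0 : ∀ b c, b ≠ p → c ≠ p → F b c = 0) (hpp : F p p = 0) :
    ∑ b, ∑ c, F b c = (∑ c, F p c) + (∑ b, F b p) := by
  have step : ∀ b, (∑ c, F b c)
      = (if b = p then (∑ c, F p c) - F p p else 0) + F b p := by
    intro b
    by_cases hb : b = p
    · subst hb; rw [if_pos rfl]; ring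
    · rw [if_neg hb, zero_add]
      exact Finset.sum_eq_single p (fun c _ hc => h0 b c hb hc) (by simp)
  rw [Finset.sum_congr rfl (fun b _ => step b), Finset.sum_add_distrib,
    Finset.sum_ite_eq' Finset.univ p (fun _ => (∑ c, F p c) - F p p),
    if_pos (Finset.mem_univ p), hpp]
  ring

lemma desw {N : ℕ} (hN : 2 ≤ N) (u v : Fin N → ℝ)
    (h0 : u (z0 hN) = 0) (h1 : u (z1 hN) = 0) :
    ∑ i, u i * v (sw i) = ∑ i, u i * v i := by
  apply Finset.sum_congr rfl; intro i _
  rcases tri hN i with h | h | h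
  · rw [h, h0, zero_mul, zero_mul]
  · rw [h, h1, zero_mul, zero_mul]
  · rw [sw_sp h]

/-- **Lemma 14** (`lemmarank3`): a trilinear form `T` on `ℝ^N` of pure boost weight zero
with respect to a null frame (only the components `T_{01i}`, `T_{10i}`, `T_{0i1}`,
`T_{1i0}`, `T_{i01}`, `T_{i10}`, `T_{ijk}` are possibly nonzero, i.e. all components of
nonzero boost weight vanish) such that the scalar invariants `Sᵏ_{ab} Sᵏᵇᵃ` and
`Sᵏ⁽²⁾_{ac} Sᵏ⁽²⁾ᵃᶜ` of the four contractions `S¹_{ad} = T_{abc} T_d{}^{cb}`,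
`S²_{cd} = T_{abc} T^{a}{}_d{}^{b}`, `S³_{ad} = T_{abc} T^{b}{}_d{}^{c}`,
`S⁴_{cd} = T_{abc} T_d{}^{ba}` all vanish, and with `T_{abc} Tᵃᵇᶜ = 0`, must be zero.
(Contrapositive: a nonzero rank-3 tensor of pure boost weight zero possesses a
non-vanishing scalar invariant.) -/
theorem rank3_pure_bw_zero_vsi (N : ℕ) (hN : 2 ≤ N)
    (T : Fin N → Fin N → Fin N → ℝ)
    (hbw : ∀ a b c : Fin N, bw a + bw b + bw c ≠ 0 → T a b c = 0)
    (h1 : invTr N (S1 N T) = 0) (h1' : invSq N (S1 N T) = 0)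
    (h2 : invTr N (S2 N T) = 0) (h2' : invSq N (S2 N T) = 0)
    (h3 : invTr N (S3 N T) = 0) (h3' : invSq N (S3 N T) = 0)
    (h4 : invTr N (S4 N T) = 0) (h4' : invSq N (S4 N T) = 0)
    (hT : (∑ a, ∑ b, ∑ c, ∑ a', ∑ b', ∑ c',
      T a b c * ηup N a a' * ηup N b b' * ηup N c c' * T a' b' c') = 0) :
    ∀ a b c, T a b c = 0 := by
  have hK1 := key hN (S1 N T) (S1_blk hN T hbw) h1 h1'
  have hK2 := key hN (S2 N T) (S2_blk hN T hbw) h2 h2'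
  have hK3 := key hN (S3 N T) (S3_blk hN T hbw) h3 h3'
  have hK4 := key hN (S4 N T) (S4_blk hN T hbw) h4 h4'
  -- E1 : AD + CB = 0
  have hE1 : (∑ c, T (z0 hN) (z1 hN) c * T (z1 hN) c (z0 hN))
      + (∑ b, T (z0 hN) b (z1 hN) * T (z1 hN) (z0 hN) b) = 0 := by
    have h := hK1 (z0 hN) (z1 hN)
    rw [S1_eq hN] at h
    have e := (split_sum hN (z1 hN)
      (fun b c => T (z0 hN) b c * T (z1 hN) (sw c) (sw b))
      (fun x y hx hy => by
        beta_reduce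
        rcases bw_ne1 hN hx with h' | h' <;> rcases bw_ne1 hN hy with h'' | h'' <;>
          rw [hbw _ _ _ (by rw [bw_z0 hN]; omega), zero_mul])
      (by beta_reduce; rw [hbw _ _ _ (by rw [bw_z0 hN, bw_z1 hN]; norm_num), zero_mul])).symm.trans h
    simp only [sw_z1 hN] at e
    have d1 : (∑ c, T (z0 hN) (z1 hN) c * T (z1 hN) (sw c) (z0 hN))
        = ∑ c, T (z0 hN) (z1 hN) c * T (z1 hN) c (z0 hN) :=
      desw hN (fun c => T (z0 hN) (z1 hN) c) (fun x => T (z1 hN) x (z0 hN))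
        (hbw _ _ _ (by rw [bw_z0 hN, bw_z1 hN]; norm_num))
        (hbw _ _ _ (by rw [bw_z0 hN, bw_z1 hN]; norm_num))
    have d2 : (∑ b, T (z0 hN) b (z1 hN) * T (z1 hN) (z0 hN) (sw b))
        = ∑ b, T (z0 hN) b (z1 hN) * T (z1 hN) (z0 hN) b :=
      desw hN (fun b => T (z0 hN) b (z1 hN)) (fun x => T (z1 hN) (z0 hN) x)
        (hbw _ _ _ (by rw [bw_z0 hN, bw_z1 hN]; norm_num))
        (hbw _ _ _ (by rw [bw_z0 hN, bw_z1 hN]; norm_num))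
    rw [d1, d2] at e
    exact e
  -- E2 : AD + FF = 0
  have hE2 : (∑ c, T (z0 hN) (z1 hN) c * T (z1 hN) c (z0 hN))
      + (∑ x, T x (z1 hN) (z0 hN) * T x (z1 hN) (z0 hN)) = 0 := by
    have h := hK2 (z0 hN) (z1 hN)
    rw [S2_eq hN] at h
    have e := (split_sum hN (z1 hN)
      (fun x y => T x y (z0 hN) * T (sw x) (z1 hN) (sw y))
      (fun x y hx hy => by
        beta_reduce
        rcases bw_ne1 hN hx with h' | h' <;> rcases bw_ne1 hN hy with h'' | h'' <;>
          rw [hbw _ _ _ (by rw [bw_z0 hN]; omega), zero_mul])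
      (by beta_reduce; rw [hbw _ _ _ (by rw [bw_z0 hN, bw_z1 hN]; norm_num), zero_mul])).symm.trans h
    simp only [sw_z1 hN] at e
    have d1 : (∑ y, T (z1 hN) y (z0 hN) * T (z0 hN) (z1 hN) (sw y))
        = ∑ y, T (z1 hN) y (z0 hN) * T (z0 hN) (z1 hN) y :=
      desw hN (fun y => T (z1 hN) y (z0 hN)) (fun x => T (z0 hN) (z1 hN) x)
        (hbw _ _ _ (by rw [bw_z0 hN, bw_z1 hN]; norm_num))
        (hbw _ _ _ (by rw [bw_z0 hN, bw_z1 hN]; norm_num))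
    have d2 : (∑ x, T x (z1 hN) (z0 hN) * T (sw x) (z1 hN) (z0 hN))
        = ∑ x, T x (z1 hN) (z0 hN) * T x (z1 hN) (z0 hN) :=
      desw hN (fun x => T x (z1 hN) (z0 hN)) (fun x => T x (z1 hN) (z0 hN))
        (hbw _ _ _ (by rw [bw_z0 hN, bw_z1 hN]; norm_num))
        (hbw _ _ _ (by rw [bw_z0 hN, bw_z1 hN]; norm_num))
    rw [d1, d2] at e
    have cAD : (∑ y, T (z1 hN) y (z0 hN) * T (z0 hN) (z1 hN) y)
        = ∑ c, T (z0 hN) (z1 hN) c * T (z1 hN) c (z0 hN) :=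
      Finset.sum_congr rfl (fun i _ => mul_comm _ _)
    rw [cAD] at e
    exact e
  -- E3 : CB + EE = 0
  have hE3 : (∑ b, T (z0 hN) b (z1 hN) * T (z1 hN) (z0 hN) b)
      + (∑ x, T x (z0 hN) (z1 hN) * T x (z0 hN) (z1 hN)) = 0 := by
    have h := hK2 (z1 hN) (z0 hN)
    rw [S2_eq hN] at h
    have e := (split_sum hN (z0 hN)
      (fun x y => T x y (z1 hN) * T (sw x) (z0 hN) (sw y))
      (fun x y hx hy => by
        beta_reduce
        rcases bw_ne0 hN hx with h' | h' <;> rcases bw_ne0 hN hy with h'' | h'' <;>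
          rw [hbw _ _ _ (by rw [bw_z1 hN]; omega), zero_mul])
      (by beta_reduce; rw [hbw _ _ _ (by rw [bw_z0 hN, bw_z1 hN]; norm_num), zero_mul])).symm.trans h
    simp only [sw_z0 hN] at e
    have d1 : (∑ y, T (z0 hN) y (z1 hN) * T (z1 hN) (z0 hN) (sw y))
        = ∑ y, T (z0 hN) y (z1 hN) * T (z1 hN) (z0 hN) y :=
      desw hN (fun y => T (z0 hN) y (z1 hN)) (fun x => T (z1 hN) (z0 hN) x)
        (hbw _ _ _ (by rw [bw_z0 hN, bw_z1 hN]; norm_num))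
        (hbw _ _ _ (by rw [bw_z0 hN, bw_z1 hN]; norm_num))
    have d2 : (∑ x, T x (z0 hN) (z1 hN) * T (sw x) (z0 hN) (z1 hN))
        = ∑ x, T x (z0 hN) (z1 hN) * T x (z0 hN) (z1 hN) :=
      desw hN (fun x => T x (z0 hN) (z1 hN)) (fun x => T x (z0 hN) (z1 hN))
        (hbw _ _ _ (by rw [bw_z0 hN, bw_z1 hN]; norm_num))
        (hbw _ _ _ (by rw [bw_z0 hN, bw_z1 hN]; norm_num))
    rw [d1, d2] at e
    exact e
  -- positivity of EE and FF
  have hEEnn : 0 ≤ ∑ x, T x (z0 hN) (z1 hN) * T x (z0 hN) (z1 hN) :=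
    Finset.sum_nonneg (fun x _ => mul_self_nonneg _)
  have hFFnn : 0 ≤ ∑ x, T x (z1 hN) (z0 hN) * T x (z1 hN) (z0 hN) :=
    Finset.sum_nonneg (fun x _ => mul_self_nonneg _)
  have hEE : (∑ x, T x (z0 hN) (z1 hN) * T x (z0 hN) (z1 hN)) = 0 := by linarith
  have hFF : (∑ x, T x (z1 hN) (z0 hN) * T x (z1 hN) (z0 hN)) = 0 := by linarith
  have he : ∀ i, T i (z0 hN) (z1 hN) = 0 := fun i => mul_self_eq_zero.mp
    ((Finset.sum_eq_zero_iff_of_nonneg (fun j _ => mul_self_nonneg _)).mp hEE i (Finset.mem_univ i))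
  have hf : ∀ i, T i (z1 hN) (z0 hN) = 0 := fun i => mul_self_eq_zero.mp
    ((Finset.sum_eq_zero_iff_of_nonneg (fun j _ => mul_self_nonneg _)).mp hFF i (Finset.mem_univ i))
  -- E4 : AA + CF = 0, CF = 0 by hf, so a = 0
  have ha : ∀ i, T (z0 hN) (z1 hN) i = 0 := by
    have h := hK3 (z0 hN) (z1 hN)
    rw [S3_eq hN] at h
    have e := (split_sum hN (z1 hN)
      (fun x y => T (z0 hN) x y * T (sw x) (z1 hN) (sw y))
      (fun x y hx hy => by
        beta_reduce
        rcases bw_ne1 hN hx with h' | h' <;> rcases bw_ne1 hN hy with h'' | h'' <;>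
          rw [hbw _ _ _ (by rw [bw_z0 hN]; omega), zero_mul])
      (by beta_reduce; rw [hbw _ _ _ (by rw [bw_z0 hN, bw_z1 hN]; norm_num), zero_mul])).symm.trans h
    simp only [sw_z1 hN] at e
    have d1 : (∑ y, T (z0 hN) (z1 hN) y * T (z0 hN) (z1 hN) (sw y))
        = ∑ y, T (z0 hN) (z1 hN) y * T (z0 hN) (z1 hN) y :=
      desw hN (fun y => T (z0 hN) (z1 hN) y) (fun x => T (z0 hN) (z1 hN) x)
        (hbw _ _ _ (by rw [bw_z0 hN, bw_z1 hN]; norm_num))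
        (hbw _ _ _ (by rw [bw_z0 hN, bw_z1 hN]; norm_num))
    have d2 : (∑ x, T (z0 hN) x (z1 hN) * T (sw x) (z1 hN) (z0 hN)) = 0 := by
      apply Finset.sum_eq_zero; intro x _
      rw [hf (sw x), mul_zero]
    rw [d1, d2] at e
    have hAAnn : 0 ≤ ∑ y, T (z0 hN) (z1 hN) y * T (z0 hN) (z1 hN) y :=
      Finset.sum_nonneg (fun x _ => mul_self_nonneg _)
    have hAA : (∑ y, T (z0 hN) (z1 hN) y * T (z0 hN) (z1 hN) y) = 0 := by linarith
    exact fun i => mul_self_eq_zero.mp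
      ((Finset.sum_eq_zero_iff_of_nonneg (fun j _ => mul_self_nonneg _)).mp hAA i (Finset.mem_univ i))
  -- E5 : BB + DE = 0, DE = 0 by he, so b = 0
  have hb : ∀ i, T (z1 hN) (z0 hN) i = 0 := by
    have h := hK3 (z1 hN) (z0 hN)
    rw [S3_eq hN] at h
    have e := (split_sum hN (z0 hN)
      (fun x y => T (z1 hN) x y * T (sw x) (z0 hN) (sw y))
      (fun x y hx hy => by
        beta_reduce
        rcases bw_ne0 hN hx with h' | h' <;> rcases bw_ne0 hN hy with h'' | h'' <;>
          rw [hbw _ _ _ (by rw [bw_z1 hN]; omega), zero_mul])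
      (by beta_reduce; rw [hbw _ _ _ (by rw [bw_z0 hN, bw_z1 hN]; norm_num), zero_mul])).symm.trans h
    simp only [sw_z0 hN] at e
    have d1 : (∑ y, T (z1 hN) (z0 hN) y * T (z1 hN) (z0 hN) (sw y))
        = ∑ y, T (z1 hN) (z0 hN) y * T (z1 hN) (z0 hN) y :=
      desw hN (fun y => T (z1 hN) (z0 hN) y) (fun x => T (z1 hN) (z0 hN) x)
        (hbw _ _ _ (by rw [bw_z0 hN, bw_z1 hN]; norm_num))
        (hbw _ _ _ (by rw [bw_z0 hN, bw_z1 hN]; norm_num))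
    have d2 : (∑ x, T (z1 hN) x (z0 hN) * T (sw x) (z0 hN) (z1 hN)) = 0 := by
      apply Finset.sum_eq_zero; intro x _
      rw [he (sw x), mul_zero]
    rw [d1, d2] at e
    have hBBnn : 0 ≤ ∑ y, T (z1 hN) (z0 hN) y * T (z1 hN) (z0 hN) y :=
      Finset.sum_nonneg (fun x _ => mul_self_nonneg _)
    have hBB : (∑ y, T (z1 hN) (z0 hN) y * T (z1 hN) (z0 hN) y) = 0 := by linarith
    exact fun i => mul_self_eq_zero.mp
      ((Finset.sum_eq_zero_iff_of_nonneg (fun j _ => mul_self_nonneg _)).mp hBB i (Finset.mem_univ i))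
  -- E6 : DD + FB = 0, FB = 0 by hf, so d = 0
  have hd : ∀ i, T (z1 hN) i (z0 hN) = 0 := by
    have h := hK4 (z0 hN) (z1 hN)
    rw [S4_eq hN] at h
    have e := (split_sum hN (z1 hN)
      (fun x y => T x y (z0 hN) * T (z1 hN) (sw y) (sw x))
      (fun x y hx hy => by
        beta_reduce
        rcases bw_ne1 hN hx with h' | h' <;> rcases bw_ne1 hN hy with h'' | h'' <;>
          rw [hbw _ _ _ (by rw [bw_z0 hN]; omega), zero_mul])
      (by beta_reduce; rw [hbw _ _ _ (by rw [bw_z0 hN, bw_z1 hN]; norm_num), zero_mul])).symm.trans h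
    simp only [sw_z1 hN] at e
    have d1 : (∑ y, T (z1 hN) y (z0 hN) * T (z1 hN) (sw y) (z0 hN))
        = ∑ y, T (z1 hN) y (z0 hN) * T (z1 hN) y (z0 hN) :=
      desw hN (fun y => T (z1 hN) y (z0 hN)) (fun x => T (z1 hN) x (z0 hN))
        (hbw _ _ _ (by rw [bw_z0 hN, bw_z1 hN]; norm_num))
        (hbw _ _ _ (by rw [bw_z0 hN, bw_z1 hN]; norm_num))
    have d2 : (∑ x, T x (z1 hN) (z0 hN) * T (z1 hN) (z0 hN) (sw x)) = 0 := by
      apply Finset.sum_eq_zero; intro x _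
      rw [hf x, zero_mul]
    rw [d1, d2] at e
    have hDDnn : 0 ≤ ∑ y, T (z1 hN) y (z0 hN) * T (z1 hN) y (z0 hN) :=
      Finset.sum_nonneg (fun x _ => mul_self_nonneg _)
    have hDD : (∑ y, T (z1 hN) y (z0 hN) * T (z1 hN) y (z0 hN)) = 0 := by linarith
    exact fun i => mul_self_eq_zero.mp
      ((Finset.sum_eq_zero_iff_of_nonneg (fun j _ => mul_self_nonneg _)).mp hDD i (Finset.mem_univ i))
  -- E7 : CC + EA = 0, EA = 0 by he, so c = 0
  have hc : ∀ i, T (z0 hN) i (z1 hN) = 0 := by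
    have h := hK4 (z1 hN) (z0 hN)
    rw [S4_eq hN] at h
    have e := (split_sum hN (z0 hN)
      (fun x y => T x y (z1 hN) * T (z0 hN) (sw y) (sw x))
      (fun x y hx hy => by
        beta_reduce
        rcases bw_ne0 hN hx with h' | h' <;> rcases bw_ne0 hN hy with h'' | h'' <;>
          rw [hbw _ _ _ (by rw [bw_z1 hN]; omega), zero_mul])
      (by beta_reduce; rw [hbw _ _ _ (by rw [bw_z0 hN, bw_z1 hN]; norm_num), zero_mul])).symm.trans h
    simp only [sw_z0 hN] at e
    have d1 : (∑ y, T (z0 hN) y (z1 hN) * T (z0 hN) (sw y) (z1 hN))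
        = ∑ y, T (z0 hN) y (z1 hN) * T (z0 hN) y (z1 hN) :=
      desw hN (fun y => T (z0 hN) y (z1 hN)) (fun x => T (z0 hN) x (z1 hN))
        (hbw _ _ _ (by rw [bw_z0 hN, bw_z1 hN]; norm_num))
        (hbw _ _ _ (by rw [bw_z0 hN, bw_z1 hN]; norm_num))
    have d2 : (∑ x, T x (z0 hN) (z1 hN) * T (z0 hN) (z1 hN) (sw x)) = 0 := by
      apply Finset.sum_eq_zero; intro x _
      rw [he x, zero_mul]
    rw [d1, d2] at e
    have hCCnn : 0 ≤ ∑ y, T (z0 hN) y (z1 hN) * T (z0 hN) y (z1 hN) :=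
      Finset.sum_nonneg (fun x _ => mul_self_nonneg _)
    have hCC : (∑ y, T (z0 hN) y (z1 hN) * T (z0 hN) y (z1 hN)) = 0 := by linarith
    exact fun i => mul_self_eq_zero.mp
      ((Finset.sum_eq_zero_iff_of_nonneg (fun j _ => mul_self_nonneg _)).mp hCC i (Finset.mem_univ i))
  -- every component with a non-spatial index vanishes
  have TZ : ∀ a b c : Fin N, ¬(2 ≤ (a : ℕ) ∧ 2 ≤ (b : ℕ) ∧ 2 ≤ (c : ℕ)) → T a b c = 0 := by
    intro a b c h
    rcases bw_cases hN a with ⟨g1, k1⟩ | ⟨g1, k1⟩ | ⟨g1, k1⟩ <;>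
      rcases bw_cases hN b with ⟨g2, k2⟩ | ⟨g2, k2⟩ | ⟨g2, k2⟩ <;>
        rcases bw_cases hN c with ⟨g3, k3⟩ | ⟨g3, k3⟩ | ⟨g3, k3⟩ <;>
          first
          | exact absurd (And.intro g1 (And.intro g2 g3)) h
          | exact hbw _ _ _ (by omega)
          | (rw [g1, g2]; exact ha _)
          | (rw [g1, g2]; exact hb _)
          | (rw [g1, g3]; exact hc _)
          | (rw [g1, g3]; exact hd _)
          | (rw [g2, g3]; exact he _)
          | (rw [g2, g3]; exact hf _)
  -- collapse the full invariant and conclude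
  simp only [etaup_apply hN, mul_ite, ite_mul, mul_one, mul_zero, zero_mul,
    one_mul, Finset.sum_ite_eq', Finset.mem_univ, if_true] at hT
  have hsq3 : ∑ a, ∑ b, ∑ c, T a b c * T a b c = 0 := by
    rw [← hT]
    apply Finset.sum_congr rfl; intro a _
    apply Finset.sum_congr rfl; intro b _
    apply Finset.sum_congr rfl; intro c _
    by_cases hall : 2 ≤ (a : ℕ) ∧ 2 ≤ (b : ℕ) ∧ 2 ≤ (c : ℕ)
    · rw [sw_sp hall.1, sw_sp hall.2.1, sw_sp hall.2.2]
    · rw [TZ a b c hall, zero_mul, zero_mul]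
  intro a b c
  have o1 := (Finset.sum_eq_zero_iff_of_nonneg (fun x _ => Finset.sum_nonneg
    (fun y _ => Finset.sum_nonneg (fun z _ => mul_self_nonneg (T x y z))))).mp
    hsq3 a (Finset.mem_univ a)
  have o2 := (Finset.sum_eq_zero_iff_of_nonneg (fun y _ => Finset.sum_nonneg
    (fun z _ => mul_self_nonneg (T a y z)))).mp o1 b (Finset.mem_univ b)
  have o3 := (Finset.sum_eq_zero_iff_of_nonneg
    (fun z _ => mul_self_nonneg (T a b z))).mp o2 c (Finset.mem_univ c)
  exact mul_self_eq_zero.mp o3
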